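/- Let W be a real separable Banach space, μ a Borel probability measure on W, and q a symmetric bilinear form on W* with q(u,u) > 0 for all u ≠ 0, such that ∫_W e^{iu(x)} dμ(x) = e^{−q(u,u)/2} for all u ∈ W*. Define the Cameron–Martin norm ‖w‖_H := sup{|u(w)|/√(q(u,u)) : u ∈ W*, u ≠ 0} and the Cameron–Martin space H := {w ∈ W : ‖w‖_H < ∞}. Then H is a dense subspace of W. -/

import Mathlib

open MeasureTheory
open scoped ENNReal

/-- The Cameron–Martin norm (valued in `[0,∞]`) associated to a positive
definite form `q` on the dual of `W`:
`‖w‖_H = sup { |u(w)|/√(q(u,u)) : u ∈ W*, u ≠ 0 }`. -/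
noncomputable def cameronMartinNorm {W : Type*} [NormedAddCommGroup W]
    [NormedSpace ℝ W] (q : (W →L[ℝ] ℝ) →ₗ[ℝ] (W →L[ℝ] ℝ) →ₗ[ℝ] ℝ)
    (w : W) : ℝ≥0∞ :=
  ⨆ u : {u : W →L[ℝ] ℝ // u ≠ 0},
    ENNReal.ofReal (|u.1 w| / Real.sqrt (q u.1 u.1))

section Aux

set_option maxHeartbeats 1000000

variable {W : Type*} [NormedAddCommGroup W] [NormedSpace ℝ W]
    [MeasurableSpace W] [BorelSpace W]

lemma cm_integrable_exp (μ : Measure W) [IsProbabilityMeasure μ] (v : W →L[ℝ] ℝ) :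
    Integrable (fun x => Complex.exp (Complex.I * (v x : ℂ))) μ := by
  refine ⟨(Complex.continuous_exp.comp (by continuity)).aestronglyMeasurable, ?_⟩
  refine HasFiniteIntegral.of_bounded (C := 1) (Filter.Eventually.of_forall fun x => ?_)
  rw [mul_comm, Complex.norm_exp_ofReal_mul_I]

lemma cm_integrable_cos (μ : Measure W) [IsProbabilityMeasure μ] (v : W →L[ℝ] ℝ) :
    Integrable (fun x => Real.cos (v x)) μ := by
  refine ⟨(Real.continuous_cos.comp v.continuous).aestronglyMeasurable, ?_⟩
  refine HasFiniteIntegral.of_bounded (C := 1) (Filter.Eventually.of_forall fun x => ?_)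
  rw [Real.norm_eq_abs]
  exact Real.abs_cos_le_one _

/-- Real form of the characteristic functional. -/
lemma cm_cos_char (μ : Measure W) [IsProbabilityMeasure μ]
    (q : (W →L[ℝ] ℝ) →ₗ[ℝ] (W →L[ℝ] ℝ) →ₗ[ℝ] ℝ)
    (hchar : ∀ u : W →L[ℝ] ℝ,
      ∫ x, Complex.exp (Complex.I * (u x : ℂ)) ∂μ
        = Complex.exp (-(q u u : ℂ) / 2))
    (v : W →L[ℝ] ℝ) :
    ∫ x, Real.cos (v x) ∂μ = Real.exp (-(q v v) / 2) := by
  have h := hchar v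
  have h1 : ∫ x, Real.cos (v x) ∂μ
      = (∫ x, Complex.exp (Complex.I * (v x : ℂ)) ∂μ).re := by
    rw [← RCLike.re_to_complex, ← integral_re (cm_integrable_exp μ v)]
    refine integral_congr_ae (Filter.Eventually.of_forall fun x => ?_)
    show Real.cos (v x) = RCLike.re (Complex.exp (Complex.I * (v x : ℂ)))
    rw [mul_comm, RCLike.re_to_complex, Complex.exp_ofReal_mul_I_re]
  rw [h1, h]
  have : (-(q v v : ℂ) / 2) = ((-(q v v) / 2 : ℝ) : ℂ) := by push_cast; ring
  rw [this, ← Complex.ofReal_exp, Complex.ofReal_re]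

lemma cm_sq_integrable_ball (μ : Measure W) [IsProbabilityMeasure μ]
    (v : W →L[ℝ] ℝ) {r : ℝ} (hr : 0 < r) :
    Integrable (fun x => (v x) ^ 2) (μ.restrict (Metric.closedBall (0:W) r)) := by
  refine ⟨((v.continuous.pow 2).aestronglyMeasurable), ?_⟩
  refine HasFiniteIntegral.of_bounded (C := (‖v‖ * r) ^ 2) ?_
  filter_upwards [ae_restrict_mem Metric.isClosed_closedBall.measurableSet] with x hx
  rw [Real.norm_eq_abs, abs_pow, ← abs_pow, abs_of_nonneg (sq_nonneg _)]
  have hx' : ‖x‖ ≤ r := by simpa using hx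
  have : |v x| ≤ ‖v‖ * r := by
    calc |v x| ≤ ‖v‖ * ‖x‖ := v.le_opNorm x
    _ ≤ ‖v‖ * r := by nlinarith [norm_nonneg v]
  have h0 : (0:ℝ) ≤ |v x| := abs_nonneg _
  rw [← sq_abs]
  nlinarith

/-- Truncated second moment bound from the characteristic functional. -/
lemma cm_moment_bound (μ : Measure W) [IsProbabilityMeasure μ]
    (q : (W →L[ℝ] ℝ) →ₗ[ℝ] (W →L[ℝ] ℝ) →ₗ[ℝ] ℝ)
    (hcos : ∀ v : W →L[ℝ] ℝ, ∫ x, Real.cos (v x) ∂μ = Real.exp (-(q v v) / 2))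
    (hq0 : ∀ v : W →L[ℝ] ℝ, 0 ≤ q v v)
    (v : W →L[ℝ] ℝ) {r : ℝ} (hr : 0 < r) :
    ∫ x in Metric.closedBall (0:W) r, (v x) ^ 2 ∂μ ≤ 4 * q v v := by
  rcases eq_or_ne v 0 with rfl | hv
  · simp [hq0]
  have hvn : 0 < ‖v‖ := norm_pos_iff.mpr hv
  set s : ℝ := 1 / (‖v‖ * r) with hs
  have hspos : 0 < s := by positivity
  -- characteristic functional at s • v
  have hqs : q (s • v) (s • v) = s ^ 2 * q v v := by
    simp [LinearMap.map_smul, LinearMap.smul_apply, smul_eq_mul]; ring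
  have hcos' : ∫ x, Real.cos (s * v x) ∂μ = Real.exp (-(s ^ 2 * q v v) / 2) := by
    have := hcos (s • v)
    rw [hqs] at this
    simpa [smul_eq_mul] using this
  -- ∫ (1 - cos (s v x)) ≤ s² q v v / 2
  have hint1 : Integrable (fun x => 1 - Real.cos (s * v x)) μ := by
    have : Integrable (fun x => Real.cos ((s • v) x)) μ := cm_integrable_cos μ (s • v)
    exact (integrable_const (1:ℝ)).sub (by simpa [smul_eq_mul] using this)
  have hmain : ∫ x, (1 - Real.cos (s * v x)) ∂μ ≤ s ^ 2 * q v v / 2 := by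
    have hcc : Integrable (fun x => Real.cos (s * v x)) μ := by
      have := cm_integrable_cos μ (s • v); simpa [smul_eq_mul] using this
    rw [integral_sub (integrable_const _) hcc, integral_const]
    simp only [measure_univ, probReal_univ, ENNReal.toReal_one, one_smul, smul_eq_mul]
    rw [hcos']
    have := Real.add_one_le_exp (-(s ^ 2 * q v v) / 2)
    linarith
  set B := Metric.closedBall (0:W) r with hB
  have hBm : MeasurableSet B := Metric.isClosed_closedBall.measurableSet
  -- pointwise on B: (s v x)²/8 ≤ 1 - cos (s v x)
  have hpt : ∀ x ∈ B, (s * v x) ^ 2 / 8 ≤ 1 - Real.cos (s * v x) := by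
    intro x hx
    have hx' : ‖x‖ ≤ r := by simpa [hB] using hx
    have habs : |s * v x| ≤ 1 := by
      rw [abs_mul, abs_of_pos hspos]
      have : |v x| ≤ ‖v‖ * r := by
        calc |v x| ≤ ‖v‖ * ‖x‖ := v.le_opNorm x
        _ ≤ ‖v‖ * r := by nlinarith
      rw [hs]
      rw [div_mul_eq_mul_div, one_mul, div_le_one (by positivity)]
      exact this
    have hpi : |s * v x| ≤ Real.pi := habs.trans (by linarith [Real.pi_gt_three])
    have := Real.cos_le_one_sub_mul_cos_sq hpi
    have hpi2 : Real.pi ^ 2 ≤ 16 := by nlinarith [Real.pi_le_four, Real.pi_pos]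
    have h2 : (1:ℝ) / 8 ≤ 2 / Real.pi ^ 2 := by
      rw [div_le_div_iff₀ (by norm_num) (by positivity)]
      nlinarith
    nlinarith [sq_nonneg (s * v x)]
  -- integrate
  have hintB1 : Integrable (fun x => 1 - Real.cos (s * v x)) (μ.restrict B) :=
    hint1.restrict
  have hintB2 : Integrable (fun x => (s * v x) ^ 2 / 8) (μ.restrict B) := by
    have : Integrable (fun x => ((s • v) x) ^ 2) (μ.restrict B) :=
      cm_sq_integrable_ball μ (s • v) hr
    have := this.div_const 8
    simpa [smul_eq_mul] using this
  have hstep1 : ∫ x in B, (s * v x) ^ 2 / 8 ∂μ ≤ ∫ x in B, (1 - Real.cos (s * v x)) ∂μ :=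
    setIntegral_mono_on hintB2 hintB1 hBm hpt
  have hstep2 : ∫ x in B, (1 - Real.cos (s * v x)) ∂μ ≤ ∫ x, (1 - Real.cos (s * v x)) ∂μ := by
    refine setIntegral_le_integral hint1 (Filter.Eventually.of_forall fun x => ?_)
    have := Real.cos_le_one (s * v x); simp; linarith
  have hconst : ∫ x in B, (s * v x) ^ 2 / 8 ∂μ = (s ^ 2 / 8) * ∫ x in B, (v x) ^ 2 ∂μ := by
    rw [← MeasureTheory.integral_const_mul]
    congr 1; ext x; ring
  have hfinal : (s ^ 2 / 8) * ∫ x in B, (v x) ^ 2 ∂μ ≤ s ^ 2 * q v v / 2 := by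
    rw [← hconst]; exact le_trans hstep1 (le_trans hstep2 hmain)
  have hs2 : 0 < s ^ 2 := by positivity
  nlinarith [hfinal]

end Aux

section Key

set_option maxHeartbeats 1000000

variable {W : Type*} [NormedAddCommGroup W] [NormedSpace ℝ W] [CompleteSpace W]
    [TopologicalSpace.SeparableSpace W] [MeasurableSpace W] [BorelSpace W]

/-- Key step: a functional vanishing on the Cameron–Martin space is zero. -/
lemma cm_key (μ : Measure W) [IsProbabilityMeasure μ]
    (q : (W →L[ℝ] ℝ) →ₗ[ℝ] (W →L[ℝ] ℝ) →ₗ[ℝ] ℝ)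
    (hpos : ∀ u : W →L[ℝ] ℝ, u ≠ 0 → 0 < q u u)
    (hchar : ∀ u : W →L[ℝ] ℝ,
      ∫ x, Complex.exp (Complex.I * (u x : ℂ)) ∂μ
        = Complex.exp (-(q u u : ℂ) / 2))
    (hmom : ∀ (v : W →L[ℝ] ℝ) {r : ℝ}, 0 < r →
      ∫ x in Metric.closedBall (0:W) r, (v x) ^ 2 ∂μ ≤ 4 * q v v)
    (hsq : ∀ (v : W →L[ℝ] ℝ) {r : ℝ}, 0 < r →
      Integrable (fun x => (v x) ^ 2) (μ.restrict (Metric.closedBall (0:W) r)))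
    (f : W →L[ℝ] ℝ) (hf : f ≠ 0)
    (hvan : ∀ w : W, cameronMartinNorm q w < ⊤ → f w = 0) : False := by
  have hqf : 0 < q f f := hpos f hf
  have hq0 : ∀ v : W →L[ℝ] ℝ, 0 ≤ q v v := by
    intro v
    rcases eq_or_ne v 0 with rfl | hv
    · simp
    · exact (hpos v hv).le
  set B : ℕ → Set W := fun n => Metric.closedBall (0:W) (n+1) with hBdef
  have hrpos : ∀ n : ℕ, (0:ℝ) < n + 1 := fun n => by positivity
  have hBm : ∀ n, MeasurableSet (B n) := fun n => Metric.isClosed_closedBall.measurableSet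
  -- the truncated mean vectors
  have hgint : ∀ n : ℕ, Integrable (fun x => f x • x) (μ.restrict (B n)) := by
    intro n
    refine ⟨(((f.continuous).smul continuous_id).aestronglyMeasurable), ?_⟩
    refine HasFiniteIntegral.of_bounded (C := ‖f‖ * (n+1) * (n+1)) ?_
    filter_upwards [ae_restrict_mem (hBm n)] with x hx
    have hx' : ‖x‖ ≤ n + 1 := by simpa [hBdef] using hx
    rw [norm_smul, Real.norm_eq_abs]
    have h1 : |f x| ≤ ‖f‖ * (n+1) := by
      calc |f x| ≤ ‖f‖ * ‖x‖ := f.le_opNorm x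
      _ ≤ ‖f‖ * (n+1) := by nlinarith [norm_nonneg f]
    nlinarith [norm_nonneg x, abs_nonneg (f x), norm_nonneg f]
  set w : ℕ → W := fun n => ∫ x in B n, f x • x ∂μ with hwdef
  have hvw : ∀ (n : ℕ) (v : W →L[ℝ] ℝ), v (w n) = ∫ x in B n, f x * v x ∂μ := by
    intro n v
    rw [hwdef]
    rw [← ContinuousLinearMap.integral_comp_comm v (hgint n)]
    congr 1; ext x; simp [smul_eq_mul]
  -- product integral bound
  have hprod : ∀ (n : ℕ) (v : W →L[ℝ] ℝ), v ≠ 0 →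
      |∫ x in B n, f x * v x ∂μ| ≤ 4 * Real.sqrt (q f f) * Real.sqrt (q v v) := by
    intro n v hv
    have hqv : 0 < q v v := hpos v hv
    set c : ℝ := Real.sqrt (q f f) / Real.sqrt (q v v) with hc
    have hsf : 0 < Real.sqrt (q f f) := Real.sqrt_pos.mpr hqf
    have hsv : 0 < Real.sqrt (q v v) := Real.sqrt_pos.mpr hqv
    have hcpos : 0 < c := by positivity
    have hint_f : Integrable (fun x => (f x) ^ 2) (μ.restrict (B n)) := hsq f (hrpos n)
    have hint_v : Integrable (fun x => (v x) ^ 2) (μ.restrict (B n)) := hsq v (hrpos n)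
    have hint_fv : Integrable (fun x => f x * v x) (μ.restrict (B n)) := by
      have := (hint_f.add hint_v)
      refine Integrable.mono this ((f.continuous.mul v.continuous).aestronglyMeasurable) ?_
      refine Filter.Eventually.of_forall fun x => ?_
      simp only [Pi.add_apply]
      rw [Real.norm_eq_abs, Real.norm_eq_abs, abs_mul]
      have h1 : |f x| * |v x| ≤ ((f x)^2 + (v x)^2) / 2 := by
        nlinarith [sq_nonneg (|f x| - |v x|), sq_abs (f x), sq_abs (v x)]
      have h2 : ((f x)^2 + (v x)^2)/2 ≤ |(f x)^2 + (v x)^2| := by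
        have := abs_nonneg ((f x)^2 + (v x)^2)
        have := le_abs_self ((f x)^2 + (v x)^2)
        linarith
      linarith
    have habs : |∫ x in B n, f x * v x ∂μ| ≤ ∫ x in B n, |f x * v x| ∂μ := by
      simpa only [Real.norm_eq_abs] using
        norm_integral_le_integral_norm (μ := μ.restrict (B n)) (fun x => f x * v x)
    have hamgm : ∀ a b : ℝ, a * b ≤ ((1/c) * a^2 + c * b^2) / 2 := by
      intro a b
      have hid : (1/c) * a^2 + c * b^2 - 2*(a*b) = (1/c) * (a - c*b)^2 := by
        field_simp; ring
      have hnn : 0 ≤ (1/c) * (a - c*b)^2 :=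
        mul_nonneg (by positivity) (sq_nonneg _)
      linarith
    have hptw : ∀ x, |f x * v x| ≤ ((1/c) * (f x)^2 + c * (v x)^2) / 2 := by
      intro x
      rw [abs_mul]
      have := hamgm |f x| |v x|
      simpa [sq_abs] using this
    have hintabs : Integrable (fun x => |f x * v x|) (μ.restrict (B n)) := hint_fv.abs
    have hintrhs : Integrable (fun x => ((1/c) * (f x)^2 + c * (v x)^2) / 2) (μ.restrict (B n)) :=
      ((hint_f.const_mul _).add (hint_v.const_mul _)).div_const 2
    have hmono : ∫ x in B n, |f x * v x| ∂μ ≤ ∫ x in B n, ((1/c) * (f x)^2 + c * (v x)^2) / 2 ∂μ :=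
      integral_mono hintabs hintrhs hptw
    have hi1 : Integrable (fun x => (1/c) * (f x)^2 / 2) (μ.restrict (B n)) :=
      (hint_f.const_mul (1/c)).div_const 2
    have hi2 : Integrable (fun x => c * (v x)^2 / 2) (μ.restrict (B n)) :=
      (hint_v.const_mul c).div_const 2
    have hrhs : ∫ x in B n, ((1/c) * (f x)^2 + c * (v x)^2) / 2 ∂μ
        = ((1/c) * ∫ x in B n, (f x)^2 ∂μ) / 2 + (c * ∫ x in B n, (v x)^2 ∂μ) / 2 := by
      rw [← MeasureTheory.integral_const_mul, ← MeasureTheory.integral_const_mul,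
        ← integral_div, ← integral_div, ← integral_add hi1 hi2]
      congr 1; ext x; ring
    have hmf : ∫ x in B n, (f x)^2 ∂μ ≤ 4 * q f f := hmom f (hrpos n)
    have hmv : ∫ x in B n, (v x)^2 ∂μ ≤ 4 * q v v := hmom v (hrpos n)
    have hIf : 0 ≤ ∫ x in B n, (f x)^2 ∂μ := integral_nonneg fun x => sq_nonneg _
    have hIv : 0 ≤ ∫ x in B n, (v x)^2 ∂μ := integral_nonneg fun x => sq_nonneg _
    have hkey : ((1/c) * ∫ x in B n, (f x)^2 ∂μ) / 2 + (c * ∫ x in B n, (v x)^2 ∂μ) / 2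
        ≤ (1/c) * (4 * q f f) / 2 + c * (4 * q v v) / 2 := by
      have h1 : (1/c) * ∫ x in B n, (f x)^2 ∂μ ≤ (1/c) * (4 * q f f) := by
        apply mul_le_mul_of_nonneg_left hmf (by positivity)
      have h2 : c * ∫ x in B n, (v x)^2 ∂μ ≤ c * (4 * q v v) := by
        apply mul_le_mul_of_nonneg_left hmv hcpos.le
      linarith
    have hcval : (1/c) * (4 * q f f) / 2 + c * (4 * q v v) / 2
        = 4 * Real.sqrt (q f f) * Real.sqrt (q v v) := by
      rw [hc]
      have hf2 : q f f = Real.sqrt (q f f) ^ 2 := (Real.sq_sqrt hqf.le).symm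
      have hv2 : q v v = Real.sqrt (q v v) ^ 2 := (Real.sq_sqrt hqv.le).symm
      field_simp
      nlinarith [hsf, hsv]
    calc |∫ x in B n, f x * v x ∂μ| ≤ _ := habs
    _ ≤ _ := hmono
    _ = _ := hrhs
    _ ≤ _ := hkey
    _ = _ := hcval
  -- w n is in the Cameron–Martin space
  have hwmem : ∀ n, cameronMartinNorm q (w n) < ⊤ := by
    intro n
    have : cameronMartinNorm q (w n) ≤ ENNReal.ofReal (4 * Real.sqrt (q f f)) := by
      refine iSup_le fun u => ?_
      have hqu : 0 < q u.1 u.1 := hpos u.1 u.2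
      have hsu : 0 < Real.sqrt (q u.1 u.1) := Real.sqrt_pos.mpr hqu
      refine ENNReal.ofReal_le_ofReal ?_
      rw [div_le_iff₀ hsu]
      rw [hvw n u.1]
      calc |∫ x in B n, f x * u.1 x ∂μ| ≤ 4 * Real.sqrt (q f f) * Real.sqrt (q u.1 u.1) :=
        hprod n u.1 u.2
      _ = _ := by ring
    exact lt_of_le_of_lt this ENNReal.ofReal_lt_top
  -- f vanishes a.e.
  have hzero : ∀ n : ℕ, μ ({x | f x ≠ 0} ∩ B n) = 0 := by
    intro n
    have h0 : f (w n) = 0 := hvan (w n) (hwmem n)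
    rw [hvw n f] at h0
    have h0' : ∫ x in B n, (f x)^2 ∂μ = 0 := by
      rw [← h0]; congr 1; ext x; ring
    have := (integral_eq_zero_iff_of_nonneg (fun x => sq_nonneg (f x)) (hsq f (hrpos n))).mp h0'
    have hae : ∀ᵐ x ∂(μ.restrict (B n)), (f x)^2 = 0 := this
    have hae' : ∀ᵐ x ∂(μ.restrict (B n)), f x = 0 := by
      filter_upwards [hae] with x hx
      exact pow_eq_zero_iff (n := 2) (by norm_num) |>.mp hx
    have hmeas : MeasurableSet {x : W | f x ≠ 0} :=
      (measurableSet_eq_fun (f.continuous.measurable) measurable_const).compl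
    have := ae_iff.mp hae'
    rw [Measure.restrict_apply hmeas] at this
    simpa using this
  have hfae : ∀ᵐ x ∂μ, f x = 0 := by
    rw [ae_iff]
    have hcover : {x : W | f x ≠ 0} = ⋃ n : ℕ, ({x | f x ≠ 0} ∩ B n) := by
      ext x
      simp only [Set.mem_iUnion, Set.mem_inter_iff, Set.mem_setOf_eq]
      constructor
      · intro hx
        obtain ⟨n, hn⟩ := exists_nat_ge ‖x‖
        exact ⟨n, hx, by simp [hBdef, Metric.mem_closedBall]; linarith⟩
      · rintro ⟨n, hn, -⟩; exact hn
    rw [show {x : W | ¬ f x = 0} = {x : W | f x ≠ 0} from rfl, hcover]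
    refine le_antisymm (le_trans (measure_iUnion_le _) ?_) zero_le
    simp [hzero]
  -- contradiction with the characteristic functional
  have h1 : ∫ x, Complex.exp (Complex.I * (f x : ℂ)) ∂μ = 1 := by
    have : ∫ x, Complex.exp (Complex.I * (f x : ℂ)) ∂μ = ∫ _x, (1:ℂ) ∂μ := by
      refine integral_congr_ae ?_
      filter_upwards [hfae] with x hx
      simp [hx]
    rw [this]; simp
  have h2 := hchar f
  rw [h1] at h2
  have h3 : (-(q f f : ℂ) / 2) = ((-(q f f) / 2 : ℝ) : ℂ) := by push_cast; ring
  rw [h3, ← Complex.ofReal_exp] at h2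
  have h4 : Real.exp (-(q f f) / 2) = 1 := by
    exact_mod_cast h2.symm
  rw [Real.exp_eq_one_iff] at h4
  linarith

end Key

section Dense

variable {W : Type*} [NormedAddCommGroup W] [NormedSpace ℝ W]

/-- The Cameron–Martin space as a submodule. -/
noncomputable def cmSubmodule (q : (W →L[ℝ] ℝ) →ₗ[ℝ] (W →L[ℝ] ℝ) →ₗ[ℝ] ℝ) :
    Submodule ℝ W where
  carrier := {w : W | cameronMartinNorm q w < ⊤}
  zero_mem' := by
    have h : cameronMartinNorm q 0 ≤ 0 := by
      refine iSup_le fun u => ?_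
      simp [cameronMartinNorm]
    exact lt_of_le_of_lt h (by simp)
  add_mem' := by
    intro a b ha hb
    have h : cameronMartinNorm q (a + b) ≤ cameronMartinNorm q a + cameronMartinNorm q b := by
      refine iSup_le fun u => ?_
      have h1 : |u.1 (a + b)| / Real.sqrt (q u.1 u.1)
          ≤ |u.1 a| / Real.sqrt (q u.1 u.1) + |u.1 b| / Real.sqrt (q u.1 u.1) := by
        rw [← add_div, div_eq_mul_inv, div_eq_mul_inv]
        refine mul_le_mul_of_nonneg_right ?_ (inv_nonneg.2 (Real.sqrt_nonneg _))
        rw [map_add]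
        exact abs_add_le _ _
      calc ENNReal.ofReal (|u.1 (a+b)| / Real.sqrt (q u.1 u.1))
          ≤ ENNReal.ofReal (|u.1 a| / Real.sqrt (q u.1 u.1)
              + |u.1 b| / Real.sqrt (q u.1 u.1)) := ENNReal.ofReal_le_ofReal h1
        _ ≤ ENNReal.ofReal (|u.1 a| / Real.sqrt (q u.1 u.1))
              + ENNReal.ofReal (|u.1 b| / Real.sqrt (q u.1 u.1)) := ENNReal.ofReal_add_le
        _ ≤ cameronMartinNorm q a + cameronMartinNorm q b :=
            add_le_add (le_iSup (fun u : {u : W →L[ℝ] ℝ // u ≠ 0} =>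
                ENNReal.ofReal (|u.1 a| / Real.sqrt (q u.1 u.1))) u)
              (le_iSup (fun u : {u : W →L[ℝ] ℝ // u ≠ 0} =>
                ENNReal.ofReal (|u.1 b| / Real.sqrt (q u.1 u.1))) u)
    exact lt_of_le_of_lt h (ENNReal.add_lt_top.2 ⟨ha, hb⟩)
  smul_mem' := by
    intro c a ha
    have h : cameronMartinNorm q (c • a) ≤ ENNReal.ofReal |c| * cameronMartinNorm q a := by
      refine iSup_le fun u => ?_
      have h1 : |u.1 (c • a)| / Real.sqrt (q u.1 u.1)
          = |c| * (|u.1 a| / Real.sqrt (q u.1 u.1)) := by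
        rw [_root_.map_smul, smul_eq_mul, abs_mul, mul_div_assoc]
      rw [h1, ENNReal.ofReal_mul (abs_nonneg c)]
      exact mul_le_mul_right (le_iSup (fun u : {u : W →L[ℝ] ℝ // u ≠ 0} =>
        ENNReal.ofReal (|u.1 a| / Real.sqrt (q u.1 u.1))) u) _
    exact lt_of_le_of_lt h (ENNReal.mul_lt_top ENNReal.ofReal_lt_top ha)

theorem cm_dense_of_key (q : (W →L[ℝ] ℝ) →ₗ[ℝ] (W →L[ℝ] ℝ) →ₗ[ℝ] ℝ)
    (key : ∀ f : W →L[ℝ] ℝ, f ≠ 0 →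
      ¬ (∀ w : W, cameronMartinNorm q w < ⊤ → f w = 0)) :
    Dense {w : W | cameronMartinNorm q w < ⊤} := by
  rw [dense_iff_closure_eq]
  by_contra hne
  have hS : {w : W | cameronMartinNorm q w < ⊤} = ((cmSubmodule q : Submodule ℝ W) : Set W) := rfl
  rw [hS] at hne
  have hcl : closure ((cmSubmodule q : Submodule ℝ W) : Set W)
      = ((cmSubmodule q).topologicalClosure : Set W) :=
    ((cmSubmodule q).topologicalClosure_coe).symm
  obtain ⟨x, hx⟩ : ∃ x : W, x ∉ closure ((cmSubmodule q : Submodule ℝ W) : Set W) := by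
    by_contra h
    push_neg at h
    exact hne (Set.eq_univ_of_forall h)
  obtain ⟨f, u, hfx, hb⟩ := geometric_hahn_banach_point_closed
    (t := closure ((cmSubmodule q : Submodule ℝ W) : Set W))
    (by rw [hcl]; exact ((cmSubmodule q).topologicalClosure).convex)
    isClosed_closure hx
  have h0mem : (0:W) ∈ closure ((cmSubmodule q : Submodule ℝ W) : Set W) :=
    subset_closure (cmSubmodule q).zero_mem
  have hu0 : u < 0 := by simpa using hb 0 h0mem
  have hfvan : ∀ y ∈ closure ((cmSubmodule q : Submodule ℝ W) : Set W), f y = 0 := by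
    intro y hy
    by_contra hfy
    have hy' : y ∈ (cmSubmodule q).topologicalClosure := by
      rw [← SetLike.mem_coe, ← hcl]; exact hy
    set c : ℝ := (u - 1) / f y with hcdef
    have hcy : c • y ∈ (cmSubmodule q).topologicalClosure :=
      Submodule.smul_mem _ c hy'
    have hcy' : (c • y) ∈ closure ((cmSubmodule q : Submodule ℝ W) : Set W) := by
      rw [hcl]; exact hcy
    have := hb (c • y) hcy'
    rw [_root_.map_smul, smul_eq_mul, hcdef, div_mul_cancel₀ _ hfy] at this
    linarith
  have hfne : f ≠ 0 := by
    intro hf0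
    rw [hf0] at hfx
    simp at hfx
    linarith
  refine key f hfne fun w hw => ?_
  exact hfvan w (subset_closure hw)

end Dense

/-- **The Cameron–Martin space of a non-degenerate Gaussian measure is dense.**
Let `μ` be a Borel probability measure on a real separable Banach space `W`
whose characteristic functional is `∫ e^{iu(x)} dμ(x) = e^{-q(u,u)/2}` for a
symmetric bilinear form `q` on `W*` with `q(u,u) > 0` for `u ≠ 0`.  Then the
Cameron–Martin space `H = {w ∈ W : ‖w‖_H < ∞}` is dense in `W`. -/
theorem cameronMartin_dense
    {W : Type*} [NormedAddCommGroup W] [NormedSpace ℝ W] [CompleteSpace W]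
    [TopologicalSpace.SeparableSpace W] [MeasurableSpace W] [BorelSpace W]
    (μ : Measure W) [IsProbabilityMeasure μ]
    (q : (W →L[ℝ] ℝ) →ₗ[ℝ] (W →L[ℝ] ℝ) →ₗ[ℝ] ℝ)
    (hsym : ∀ u v : W →L[ℝ] ℝ, q u v = q v u)
    (hpos : ∀ u : W →L[ℝ] ℝ, u ≠ 0 → 0 < q u u)
    (hchar : ∀ u : W →L[ℝ] ℝ,
      ∫ x, Complex.exp (Complex.I * (u x : ℂ)) ∂μ
        = Complex.exp (-(q u u : ℂ) / 2)) :
    Dense {w : W | cameronMartinNorm q w < ⊤} := by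
  have hq0 : ∀ v : W →L[ℝ] ℝ, 0 ≤ q v v := by
    intro v
    rcases eq_or_ne v 0 with rfl | hv
    · simp
    · exact (hpos v hv).le
  refine cm_dense_of_key q fun f hf hvan => ?_
  exact cm_key μ q hpos hchar
    (fun v r hr => cm_moment_bound μ q (cm_cos_char μ q hchar) hq0 v hr)
    (fun v r hr => cm_sq_integrable_ball μ v hr)
    f hf hvan
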